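/- Let N be a countable set, (E_k)_{k∈N} i.i.d. unit exponentials, and for probability measures μ, ν on N define L_μ = argmin_k E_k/μ(k) and L_ν = argmin_k E_k/ν(k). Then P(L_μ ≠ L_ν) ≤ 2·d_TV(μ,ν)/(1 + d_TV(μ,ν)) ≤ 2·d_TV(μ,ν). -/

import Mathlib

open MeasureTheory ProbabilityTheory Real Set Filter Topology
open scoped ENNReal NNReal

/-- law of a unit exponential random variable -/
lemma law_exp {Ω : Type} [MeasurableSpace Ω] (μ : Measure Ω) [IsProbabilityMeasure μ]
    (f : Ω → ℝ) (hfmeas : Measurable f)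
    (hfexp : ∀ x : ℝ, 0 ≤ x → μ {ω | f ω ≤ x} = ENNReal.ofReal (1 - Real.exp (-x))) :
    μ.map f = expMeasure 1 := by
  have h0 : μ {ω | f ω ≤ (0:ℝ)} = 0 := by
    rw [hfexp 0 le_rfl]; simp
  refine Measure.ext_of_Iic _ _ (fun x => ?_)
  rw [Measure.map_apply hfmeas measurableSet_Iic]
  have hexp : expMeasure 1 (Iic x) = ENNReal.ofReal (if 0 ≤ x then 1 - rexp (-(1*x)) else 0) := by
    rw [← lintegral_exponentialPDF_eq_antiDeriv one_pos x, expMeasure, gammaMeasure,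
      withDensity_apply _ measurableSet_Iic]
    rfl
  rw [hexp]
  split_ifs with h
  · rw [one_mul]; exact hfexp x h
  · rw [ENNReal.ofReal_zero]
    exact measure_mono_null (fun ω (hω : f ω ≤ x) => le_trans hω (le_of_lt (not_le.1 h))) h0

lemma exp_atom {Ω : Type} [MeasurableSpace Ω] (μ : Measure Ω) [IsProbabilityMeasure μ]
    (f : Ω → ℝ) (hfmeas : Measurable f)
    (hfexp : ∀ x : ℝ, 0 ≤ x → μ {ω | f ω ≤ x} = ENNReal.ofReal (1 - Real.exp (-x)))
    (x : ℝ) : μ {ω | f ω = x} = 0 := by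
  have : μ {ω | f ω = x} = μ.map f {x} := by
    rw [Measure.map_apply hfmeas (measurableSet_singleton x)]; rfl
  rw [this, law_exp μ f hfmeas hfexp, expMeasure, gammaMeasure,
    withDensity_apply _ (measurableSet_singleton x),
    Measure.restrict_eq_zero.mpr (measure_singleton x), lintegral_zero_measure]

lemma exp_survival {Ω : Type} [MeasurableSpace Ω] (μ : Measure Ω) [IsProbabilityMeasure μ]
    (f : Ω → ℝ) (hfmeas : Measurable f)
    (hfexp : ∀ x : ℝ, 0 ≤ x → μ {ω | f ω ≤ x} = ENNReal.ofReal (1 - Real.exp (-x)))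
    (x : ℝ) (hx : 0 ≤ x) : μ {ω | x ≤ f ω} = ENNReal.ofReal (rexp (-x)) := by
  have hlt : μ {ω | f ω < x} = ENNReal.ofReal (1 - rexp (-x)) := by
    refine le_antisymm ?_ ?_
    · rw [← hfexp x hx]
      exact measure_mono (fun ω (h : f ω < x) => le_of_lt h)
    · rw [← hfexp x hx]
      calc μ {ω | f ω ≤ x} ≤ μ ({ω | f ω < x} ∪ {ω | f ω = x}) := by
            refine measure_mono (fun ω (h : f ω ≤ x) => ?_)
            rcases lt_or_eq_of_le h with h' | h'
            · exact Or.inl h'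
            · exact Or.inr h'
        _ ≤ μ {ω | f ω < x} + μ {ω | f ω = x} := measure_union_le _ _
        _ = μ {ω | f ω < x} := by rw [exp_atom μ f hfmeas hfexp x, add_zero]
  have hc : {ω | x ≤ f ω} = {ω | f ω < x}ᶜ := by
    ext ω; simp [not_lt]
  have hmeas : MeasurableSet {ω | f ω < x} := hfmeas measurableSet_Iio
  rw [hc, measure_compl hmeas (measure_ne_top μ _), hlt, measure_univ]
  have h1 : (1:ℝ≥0∞) = ENNReal.ofReal (rexp (-x)) + ENNReal.ofReal (1 - rexp (-x)) := by
    rw [← ENNReal.ofReal_add (le_of_lt (exp_pos _))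
      (by nlinarith [Real.exp_le_exp.mpr (neg_nonpos.2 hx), Real.exp_zero])]
    norm_num
  rw [h1, ENNReal.add_sub_cancel_right ENNReal.ofReal_ne_top]

lemma exp_mgf {Ω : Type} [MeasurableSpace Ω] (μ : Measure Ω) [IsProbabilityMeasure μ]
    (f : Ω → ℝ) (hfmeas : Measurable f)
    (hfexp : ∀ x : ℝ, 0 ≤ x → μ {ω | f ω ≤ x} = ENNReal.ofReal (1 - Real.exp (-x)))
    (T : ℝ) (hT : 0 ≤ T) :
    ∫⁻ ω, ENNReal.ofReal (rexp (-(T * f ω))) ∂μ = ENNReal.ofReal (1/(1+T)) := by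
  have hφ : Measurable (fun x : ℝ => ENNReal.ofReal (rexp (-(T * x)))) :=
    (Real.measurable_exp.comp ((measurable_id.const_mul T).neg)).ennreal_ofReal
  have hstep : ∫⁻ ω, ENNReal.ofReal (rexp (-(T * f ω))) ∂μ
      = ∫⁻ x, ENNReal.ofReal (rexp (-(T * x))) ∂(μ.map f) := (lintegral_map hφ hfmeas).symm
  rw [hstep, law_exp μ f hfmeas hfexp, expMeasure, gammaMeasure,
    lintegral_withDensity_eq_lintegral_mul _ (show Measurable (gammaPDF 1 1) from (measurable_gammaPDFReal 1 1).ennreal_ofReal) hφ]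
  have hpt : (fun x => ((gammaPDF 1 1) * fun x => ENNReal.ofReal (rexp (-(T * x)))) x)
      = fun x => ENNReal.ofReal (1/(1+T)) * exponentialPDF (1+T) x := by
    funext x
    have h1T : (0:ℝ) < 1 + T := by linarith
    simp only [Pi.mul_apply]
    have : gammaPDF 1 1 x = exponentialPDF 1 x := rfl
    rw [this, exponentialPDF_eq, exponentialPDF_eq]
    split_ifs with h
    · rw [← ENNReal.ofReal_mul (by positivity), ← ENNReal.ofReal_mul (by positivity)]
      congr 1
      rw [one_mul, ← Real.exp_add]
      rw [show 1/(1+T) * ((1+T) * rexp (-((1+T)*x))) = rexp (-((1+T)*x)) by field_simp]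
      congr 1; ring
    · simp
  rw [hpt, lintegral_const_mul _ (by
      have : exponentialPDF (1+T) = fun x => ENNReal.ofReal (exponentialPDFReal (1+T) x) := rfl
      rw [this]; exact (measurable_exponentialPDFReal (1+T)).ennreal_ofReal),
    lintegral_exponentialPDF_eq_one (by linarith : (0:ℝ) < 1 + T), mul_one]

lemma engine {Ω N : Type} [MeasurableSpace Ω] [MeasurableSpace N]
    [MeasurableSingletonClass N] [Countable N]
    (μ : Measure Ω) [IsProbabilityMeasure μ]
    (E : N → Ω → ℝ) (hEmeas : ∀ k, Measurable (E k))
    (hEindep : iIndepFun E μ)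
    (hEexp : ∀ k, ∀ x : ℝ, 0 ≤ x →
      μ {ω | E k ω ≤ x} = ENNReal.ofReal (1 - Real.exp (-x)))
    (k : N) (c : N → ℝ) (hc0 : ∀ j, 0 ≤ c j) (hck : c k = 0) (hcs : Summable c) :
    ENNReal.ofReal (1 / (1 + ∑' j, c j)) ≤ μ {ω | ∀ j, j ≠ k → c j * E k ω < E j ω} := by
  have hpos_ae : ∀ᵐ ω ∂μ, ∀ j, 0 < E j ω := by
    rw [ae_all_iff]
    intro j
    rw [ae_iff]
    have h0 : μ {ω | E j ω ≤ 0} = 0 := by rw [hEexp j 0 le_rfl]; simp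
    simpa [not_lt] using h0
  by_cases hallz : ∀ j, c j = 0
  · -- trivial case: all coefficients vanish
    have hT : ∑' j, c j = 0 := by rw [tsum_congr hallz]; exact tsum_zero
    rw [hT]
    have hsub : ∀ᵐ ω ∂μ, ω ∈ {ω | ∀ j, j ≠ k → c j * E k ω < E j ω} := by
      filter_upwards [hpos_ae] with ω hω j hj
      rw [hallz j, zero_mul]; exact hω j
    have hcompl : μ {ω | ∀ j, j ≠ k → c j * E k ω < E j ω}ᶜ = 0 := by
      rw [ae_iff] at hsub; exact hsub
    calc ENNReal.ofReal (1/(1+0)) ≤ 1 := by norm_num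
      _ = μ univ := measure_univ.symm
      _ ≤ μ {ω | ∀ j, j ≠ k → c j * E k ω < E j ω}
          + μ {ω | ∀ j, j ≠ k → c j * E k ω < E j ω}ᶜ := by
            rw [← union_compl_self {ω | ∀ j, j ≠ k → c j * E k ω < E j ω}]
            exact measure_union_le _ _
      _ = μ {ω | ∀ j, j ≠ k → c j * E k ω < E j ω} := by rw [hcompl, add_zero]
  · push_neg at hallz
    classical
    set T := ∑' j, c j with hTdef
    have hT0 : 0 ≤ T := tsum_nonneg hc0
    haveI hne : Nonempty ↥(Function.support c) := by
      obtain ⟨j0, hj0⟩ := hallz; exact ⟨⟨j0, hj0⟩⟩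
    obtain ⟨e, he⟩ := exists_surjective_nat ↥(Function.support c)
    -- finite index sets
    set S' : ℕ → Finset ↥(Function.support c) :=
      fun n => Finset.image e (Finset.range n) with hS'def
    set S : ℕ → Finset N := fun n => Finset.image Subtype.val (S' n) with hSdef
    have hS'mono : Monotone S' := fun a b hab =>
      Finset.image_subset_image (Finset.range_subset_range.2 hab)
    have hSmono : Monotone S := fun a b hab => Finset.image_subset_image (hS'mono hab)
    -- sums over finite sets tend to T
    have hsum_tend : Tendsto (fun n => ∑ j ∈ S n, c j) atTop (𝓝 T) := by
      have h1 : ∀ n, ∑ j ∈ S n, c j = ∑ i ∈ S' n, c i.1 := by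
        intro n
        rw [hSdef]
        exact (Finset.sum_image (fun x _ y _ h => Subtype.coe_injective h))
      have hhs : HasSum (fun i : ↥(Function.support c) => c i.1) T :=
        hasSum_subtype_support.2 hcs.hasSum
      have h2 : Tendsto S' atTop atTop := by
        apply tendsto_atTop_finset_of_monotone hS'mono
        intro i
        obtain ⟨n, hn⟩ := he i
        exact ⟨n + 1, by rw [hS'def]; exact Finset.mem_image.2 ⟨n, Finset.mem_range.2 (by omega), hn⟩⟩
      have := hhs.comp h2
      simp only [Function.comp] at this
      exact (funext h1 : (fun n => ∑ j ∈ S n, c j) = _) ▸ this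
    -- survival of finite intersections
    have hsurv_fin : ∀ t : ℝ, 0 ≤ t → ∀ n,
        μ (⋂ j ∈ S n, E j ⁻¹' Ici (c j * t))
          = ENNReal.ofReal (rexp (-(t * ∑ j ∈ S n, c j))) := by
      intro t ht n
      rw [hEindep.measure_inter_preimage_eq_mul (S n)
        (sets := fun j => Ici (c j * t)) (fun j _ => measurableSet_Ici)]
      have h1 : ∀ j ∈ S n, μ (E j ⁻¹' Ici (c j * t)) = ENNReal.ofReal (rexp (-(c j * t))) := by
        intro j _
        exact exp_survival μ (E j) (hEmeas j) (hEexp j) (c j * t)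
          (mul_nonneg (hc0 j) ht)
      rw [Finset.prod_congr rfl h1, ← ENNReal.ofReal_prod_of_nonneg
        (fun j _ => (exp_pos _).le), ← Real.exp_sum]
      congr 1
      rw [Finset.mul_sum, ← Finset.sum_neg_distrib]
      congr 1
      exact Finset.sum_congr rfl (fun j _ => by ring)
    -- survival of the countable intersection
    have hsurv : ∀ t : ℝ, 0 ≤ t →
        μ (⋂ i : ↥(Function.support c), E i.1 ⁻¹' Ici (c i.1 * t))
          = ENNReal.ofReal (rexp (-(t * T))) := by
      intro t ht
      have hiI : ⋂ n, ⋂ j ∈ S n, E j ⁻¹' Ici (c j * t)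
          = ⋂ i : ↥(Function.support c), E i.1 ⁻¹' Ici (c i.1 * t) := by
        ext ω
        simp only [mem_iInter]
        constructor
        · intro h i
          obtain ⟨n, hn⟩ := he i
          exact h (n+1) i.1 (Finset.mem_image.2 ⟨i, Finset.mem_image.2
            ⟨n, Finset.mem_range.2 (by omega), hn⟩, rfl⟩)
        · intro h n j hj
          obtain ⟨i, _, rfl⟩ := Finset.mem_image.1 hj
          exact h i
      have htend := tendsto_measure_iInter_atTop
        (s := fun n => ⋂ j ∈ S n, E j ⁻¹' Ici (c j * t))
        (fun n => (Finset.measurableSet_biInter _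
          (fun j _ => (hEmeas j) measurableSet_Ici)).nullMeasurableSet)
        (fun a b hab => biInter_subset_biInter_left (hSmono hab))
        ⟨0, measure_ne_top μ _⟩
      have htend2 : Tendsto (fun n => μ (⋂ j ∈ S n, E j ⁻¹' Ici (c j * t))) atTop
          (𝓝 (ENNReal.ofReal (rexp (-(t * T))))) := by
        have hcont : Tendsto (fun s : ℝ => ENNReal.ofReal (rexp (-(t * s)))) (𝓝 T)
            (𝓝 (ENNReal.ofReal (rexp (-(t * T))))) := by
          exact (ENNReal.continuous_ofReal.tendsto _).comp
            ((Real.continuous_exp.tendsto _).comp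
              ((continuous_const.mul continuous_id).neg.tendsto _))
        have := hcont.comp hsum_tend
        exact Tendsto.congr (fun n => (hsurv_fin t ht n).symm) this
      rw [← hiI]
      exact tendsto_nhds_unique htend htend2
    -- the infimum process
    set G : Ω → ℝ≥0∞ :=
      fun ω => ⨅ i : ↥(Function.support c), ENNReal.ofReal (E i.1 ω / c i.1) with hGdef
    have hGmeas : Measurable G :=
      Measurable.iInf (fun i => ((hEmeas i.1).div_const _).ennreal_ofReal)
    -- lower bound on the survival of G
    have hGsurv : ∀ x : ℝ, 0 ≤ x →
        ENNReal.ofReal (rexp (-(T * x))) ≤ μ {ω | ENNReal.ofReal x < G ω} := by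
      intro x hx
      have hstep : ∀ n : ℕ,
          ENNReal.ofReal (rexp (-((x + 1/(n+1)) * T))) ≤ μ {ω | ENNReal.ofReal x < G ω} := by
        intro n
        have hx' : (0:ℝ) < x + 1/(n+1) := by positivity
        rw [← hsurv (x + 1/(n+1)) hx'.le]
        refine measure_mono (fun ω hω => ?_)
        simp only [mem_iInter] at hω
        have hG : ENNReal.ofReal (x + 1/(n+1)) ≤ G ω := by
          refine le_iInf (fun i => ENNReal.ofReal_le_ofReal ?_)
          have hci : 0 < c i.1 := lt_of_le_of_ne (hc0 i.1) (Ne.symm i.2)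
          rw [le_div_iff₀ hci]
          have := hω i
          simpa [mul_comm] using this
        exact lt_of_lt_of_le (ENNReal.ofReal_lt_ofReal_iff_of_nonneg hx |>.2 (lt_add_of_pos_right x (by positivity))) hG
      refine le_of_tendsto (x := atTop) (f := fun n : ℕ => ENNReal.ofReal (rexp (-((x + 1/(n+1)) * T)))) ?_ (Filter.Eventually.of_forall hstep)
      have hcont : Tendsto (fun s : ℝ => ENNReal.ofReal (rexp (-(s * T)))) (𝓝 x)
          (𝓝 (ENNReal.ofReal (rexp (-(x * T))))) :=
        (ENNReal.continuous_ofReal.tendsto _).comp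
          ((Real.continuous_exp.tendsto _).comp
            ((continuous_id.mul continuous_const).neg.tendsto _))
      have hinner : Tendsto (fun n : ℕ => x + 1/(n+1 : ℝ)) atTop (𝓝 x) := by
        have := tendsto_one_div_add_atTop_nhds_zero_nat (𝕜 := ℝ)
        simpa using tendsto_const_nhds.add this
      have := hcont.comp hinner
      have hxT : -(T * x) = -(x * T) := by ring
      rw [hxT]
      exact this
    -- independence of E k and G
    have hIndepFun : IndepFun (E k) G μ := by
      have h_le : ∀ j : N, MeasurableSpace.comap (E j) inferInstance ≤ _ :=
        fun j => (hEmeas j).comap_le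
      have hiI : iIndep (fun j => MeasurableSpace.comap (E j) inferInstance) μ := hEindep
      have hInd := (indep_biSup_compl h_le hiI {k}ᶜ).symm
      rw [compl_compl] at hInd
      have hk : (⨆ j ∈ ({k} : Set N), MeasurableSpace.comap (E j) inferInstance)
          = MeasurableSpace.comap (E k) inferInstance := by
        simp
      rw [hk] at hInd
      rw [indepFun_iff_measure_inter_preimage_eq_mul]
      intro s t hs ht
      have h1 : MeasurableSet[MeasurableSpace.comap (E k) inferInstance] (E k ⁻¹' s) :=
        ⟨s, hs, rfl⟩
      have hGM : Measurable[⨆ j ∈ ({k}ᶜ : Set N),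
          MeasurableSpace.comap (E j) inferInstance] G := by
        refine Measurable.iInf (fun i => ?_)
        have hji : (i : N) ≠ k := fun h => i.2 (by rw [h]; exact hck)
        have hEk : Measurable[MeasurableSpace.comap (E i.1) inferInstance] (E i.1) :=
          fun u hu => ⟨u, hu, rfl⟩
        exact ((hEk.mono (le_biSup (fun j => MeasurableSpace.comap (E j) inferInstance) (by simp [hji] : (i:N) ∈ ({k}ᶜ : Set N))) le_rfl).div_const _).ennreal_ofReal
      exact (Indep_iff _ _ _).1 hInd _ _ h1 (hGM ht)
    -- the key probability computation
    set X : Ω → ℝ≥0∞ := fun ω => ENNReal.ofReal (E k ω) with hXdef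
    have hXmeas : Measurable X := (hEmeas k).ennreal_ofReal
    have hXG : IndepFun X G μ := by
      have := hIndepFun.comp ENNReal.measurable_ofReal measurable_id
      exact this
    have hmap := (indepFun_iff_map_prod_eq_prod_map_map hXmeas.aemeasurable
      hGmeas.aemeasurable).1 hXG
    have hlt_meas : MeasurableSet {p : ℝ≥0∞ × ℝ≥0∞ | p.1 < p.2} :=
      measurableSet_lt measurable_fst measurable_snd
    have hA' : μ {ω | X ω < G ω} = ∫⁻ ω, (μ.map G) (Ioi (X ω)) ∂μ := by
      have h1 : {ω | X ω < G ω}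
          = (fun ω => (X ω, G ω)) ⁻¹' {p : ℝ≥0∞ × ℝ≥0∞ | p.1 < p.2} := rfl
      rw [h1, ← Measure.map_apply (hXmeas.prodMk hGmeas) hlt_meas, hmap,
        Measure.prod_apply hlt_meas]
      have h2 : ∀ x : ℝ≥0∞, (Prod.mk x ⁻¹' {p : ℝ≥0∞ × ℝ≥0∞ | p.1 < p.2}) = Ioi x :=
        fun x => rfl
      simp_rw [h2]
      have hmeas2 : Measurable (fun x : ℝ≥0∞ => (μ.map G) (Ioi x)) := by
        have : Antitone (fun x : ℝ≥0∞ => (μ.map G) (Ioi x)) :=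
          fun a b hab => measure_mono (Ioi_subset_Ioi hab)
        exact this.measurable
      rw [lintegral_map hmeas2 hXmeas]
    have hbound : ENNReal.ofReal (1/(1+T)) ≤ μ {ω | X ω < G ω} := by
      rw [hA', ← exp_mgf μ (E k) (hEmeas k) (hEexp k) T hT0]
      refine lintegral_mono_ae ?_
      filter_upwards [hpos_ae] with ω hω
      have hx : 0 ≤ E k ω := (hω k).le
      have h1 := hGsurv (E k ω) hx
      rw [Measure.map_apply hGmeas measurableSet_Ioi]
      exact h1
    -- conclude via inclusion
    refine le_trans hbound (measure_mono_ae ?_)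
    filter_upwards [hpos_ae] with ω hω hlt
    intro j hj
    by_cases hcj : c j = 0
    · rw [hcj, zero_mul]; exact hω j
    · have hcjpos : 0 < c j := lt_of_le_of_ne (hc0 j) (Ne.symm hcj)
      have h2 : G ω ≤ ENNReal.ofReal (E j ω / c j) :=
        iInf_le _ (⟨j, hcj⟩ : ↥(Function.support c))
      have h4 : E k ω < E j ω / c j :=
        (ENNReal.ofReal_lt_ofReal_iff_of_nonneg (hω k).le).1 (lt_of_lt_of_le hlt h2)
      calc c j * E k ω < c j * (E j ω / c j) := (mul_lt_mul_iff_right₀ hcjpos).2 h4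
        _ = E j ω := by field_simp

/-- pairwise-optimal grand coupling bound: Let `(E_k)_{k∈N}` be i.i.d. unit
exponentials, `p, q` probability vectors on `N`, and let `L_p, L_q` be the (a.s. unique)
argmins of `k ↦ E_k/p(k)` resp. `k ↦ E_k/q(k)` over the respective supports. Then
`P(L_p ≠ L_q) ≤ 2·d_TV(p,q)/(1 + d_TV(p,q)) ≤ 2·d_TV(p,q)`, where
`d_TV(p,q) = (1/2)Σ_k |p(k) − q(k)|`. -/
theorem stmt7 {Ω N : Type} [MeasurableSpace Ω] [MeasurableSpace N]
    [MeasurableSingletonClass N] [Countable N]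
    (μ : Measure Ω) [IsProbabilityMeasure μ]
    (E : N → Ω → ℝ) (hEmeas : ∀ k, Measurable (E k))
    (hEindep : iIndepFun E μ)
    (hEexp : ∀ k, ∀ x : ℝ, 0 ≤ x →
      μ {ω | E k ω ≤ x} = ENNReal.ofReal (1 - Real.exp (-x)))
    (p q : N → ℝ) (hp0 : ∀ k, 0 ≤ p k) (hp1 : HasSum p 1)
    (hq0 : ∀ k, 0 ≤ q k) (hq1 : HasSum q 1)
    (Lp Lq : Ω → N) (hLpmeas : Measurable Lp) (hLqmeas : Measurable Lq)
    (hpargmin : ∀ᵐ ω ∂μ, 0 < p (Lp ω) ∧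
      ∀ k, 0 < p k → k ≠ Lp ω → E (Lp ω) ω / p (Lp ω) < E k ω / p k)
    (hqargmin : ∀ᵐ ω ∂μ, 0 < q (Lq ω) ∧
      ∀ k, 0 < q k → k ≠ Lq ω → E (Lq ω) ω / q (Lq ω) < E k ω / q k) :
    (μ {ω | Lp ω ≠ Lq ω}).toReal
        ≤ 2 * ((1 / 2) * ∑' k, |p k - q k|) / (1 + (1 / 2) * ∑' k, |p k - q k|)
      ∧ 2 * ((1 / 2) * ∑' k, |p k - q k|) / (1 + (1 / 2) * ∑' k, |p k - q k|)
        ≤ 2 * ((1 / 2) * ∑' k, |p k - q k|) := by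
  classical
  set d := (1/2 : ℝ) * ∑' k, |p k - q k| with hd
  have hpq : Summable (fun k => p k + q k) := hp1.summable.add hq1.summable
  have habs : Summable (fun k => |p k - q k|) :=
    Summable.of_nonneg_of_le (fun k => abs_nonneg _)
      (fun k => by
        have h1 := abs_sub (p k) (q k)
        have := abs_of_nonneg (hp0 k)
        have := abs_of_nonneg (hq0 k)
        calc |p k - q k| ≤ |p k| + |q k| := abs_sub _ _
          _ = p k + q k := by rw [abs_of_nonneg (hp0 k), abs_of_nonneg (hq0 k)]) hpq
  have habs_hs : HasSum (fun k => |p k - q k|) (2*d) := by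
    have h2 : 2*d = ∑' k, |p k - q k| := by rw [hd]; ring
    rw [h2]; exact habs.hasSum
  have hd0 : 0 ≤ d := by
    rw [hd]
    have : 0 ≤ ∑' k, |p k - q k| := tsum_nonneg (fun k => abs_nonneg (p k - q k))
    positivity
  have hr_hs : HasSum (fun k => max (p k) (q k)) (1 + d) := by
    have h1 : ∀ k, max (p k) (q k) = (p k + q k + |p k - q k|)/2 := by
      intro k
      rcases le_total (p k) (q k) with h | h
      · rw [max_eq_right h, abs_of_nonpos (by linarith)]; ring
      · rw [max_eq_left h, abs_of_nonneg (by linarith)]; ring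
    have h2 := ((hp1.add hq1).add habs_hs).div_const 2
    have h3 : (1 + 1 + 2*d)/2 = 1 + d := by ring
    rw [funext h1]
    rw [← h3]
    exact h2
  have hm_hs : HasSum (fun k => min (p k) (q k)) (1 - d) := by
    have h1 : ∀ k, min (p k) (q k) = (p k + q k - |p k - q k|)/2 := by
      intro k
      rcases le_total (p k) (q k) with h | h
      · rw [min_eq_left h, abs_of_nonpos (by linarith)]; ring
      · rw [min_eq_right h, abs_of_nonneg (by linarith)]; ring
    have h2 := ((hp1.add hq1).sub habs_hs).div_const 2
    have h3 : (1 + 1 - 2*d)/2 = 1 - d := by ring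
    rw [funext h1, ← h3]
    exact h2
  have hd1 : d ≤ 1 := by
    have h0 : (0:ℝ) ≤ 1 - d :=
      hasSum_le (fun k => le_min (hp0 k) (hq0 k)) hasSum_zero hm_hs
    linarith
  have h1d : (0:ℝ) < 1 + d := by linarith
  have hpos_ae : ∀ᵐ ω ∂μ, ∀ j, 0 < E j ω := by
    rw [ae_all_iff]
    intro j
    rw [ae_iff]
    have h0 : μ {ω | E j ω ≤ 0} = 0 := by rw [hEexp j 0 le_rfl]; simp
    simpa [not_lt] using h0
  -- key per-state bound
  have hkey : ∀ k : N, ENNReal.ofReal (min (p k) (q k) / (1 + d))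
      ≤ μ {ω | Lp ω = k ∧ Lq ω = k} := by
    intro k
    by_cases hmk : 0 < min (p k) (q k)
    swap
    · have h0 : min (p k) (q k) = 0 :=
        le_antisymm (not_lt.1 hmk) (le_min (hp0 k) (hq0 k))
      rw [h0, zero_div, ENNReal.ofReal_zero]
      exact zero_le
    · set c : N → ℝ := fun j => if j = k then 0 else max (p j) (q j) / min (p k) (q k)
        with hcdef
      have hc0 : ∀ j, 0 ≤ c j := by
        intro j
        rw [hcdef]
        dsimp only
        split_ifs
        · exact le_rfl
        · exact div_nonneg (le_trans (hp0 j) (le_max_left _ _)) hmk.le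
      have hck : c k = 0 := if_pos rfl
      have hcle : ∀ j, c j ≤ max (p j) (q j) / min (p k) (q k) := by
        intro j
        rw [hcdef]
        dsimp only
        split_ifs
        · exact div_nonneg (le_trans (hp0 j) (le_max_left _ _)) hmk.le
        · exact le_rfl
      have hcs : Summable c :=
        Summable.of_nonneg_of_le hc0 hcle (hr_hs.summable.div_const _)
      have hT : ∑' j, c j = (1 + d - max (p k) (q k)) / min (p k) (q k) := by
        have h1 : ∀ j, c j = (if j = k then 0 else max (p j) (q j)) / min (p k) (q k) := by
          intro j
          rw [hcdef]
          dsimp only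
          split_ifs
          · rw [zero_div]
          · rfl
        rw [tsum_congr h1, tsum_div_const]
        congr 1
        have h2 := Summable.tsum_eq_add_tsum_ite hr_hs.summable k
        have h3 : ∑' j, max (p j) (q j) = 1 + d := hr_hs.tsum_eq
        rw [h3] at h2
        linarith
      have heng := engine μ E hEmeas hEindep hEexp k c hc0 hck hcs
      rw [hT] at heng
      have hrk_le : max (p k) (q k) ≤ 1 + d :=
        le_hasSum hr_hs k (fun j _ => le_trans (hp0 j) (le_max_left _ _))
      have hmk_le : min (p k) (q k) ≤ max (p k) (q k) := min_le_max
      have hden : (0:ℝ) < min (p k) (q k) + (1 + d) - max (p k) (q k) := by linarith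
      have hsimp : 1/(1 + (1 + d - max (p k) (q k))/min (p k) (q k))
          = min (p k) (q k) / (min (p k) (q k) + (1 + d) - max (p k) (q k)) := by
        rw [div_eq_div_iff]
        · field_simp
          ring
        · have h9 : (0:ℝ) < min (p k) (q k) + (1 + d - max (p k) (q k)) := by linarith
          have h10 : (0:ℝ) < 1 + (1 + d - max (p k) (q k))/min (p k) (q k) := by
            calc (0:ℝ) < (min (p k) (q k) + (1 + d - max (p k) (q k))) / min (p k) (q k) :=
                  div_pos h9 hmk
              _ = 1 + (1 + d - max (p k) (q k))/min (p k) (q k) := by field_simp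
          exact h10.ne'
        · exact hden.ne'
      rw [hsimp] at heng
      have hle : min (p k) (q k) / (1 + d)
          ≤ min (p k) (q k) / (min (p k) (q k) + (1 + d) - max (p k) (q k)) :=
        div_le_div_of_nonneg_left hmk.le hden (by linarith)
      refine le_trans (ENNReal.ofReal_le_ofReal hle) (le_trans heng ?_)
      refine measure_mono_ae ?_
      filter_upwards [hpargmin, hqargmin, hpos_ae] with ω hp' hq' hpos hA
      have hpk : 0 < p k := lt_of_lt_of_le hmk (min_le_left _ _)
      have hqk : 0 < q k := lt_of_lt_of_le hmk (min_le_right _ _)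
      constructor
      · by_contra hne
        have hLp := hp'.2 k hpk (fun h => hne h.symm)
        have hj := hA (Lp ω) (fun h => hne h)
        rw [hcdef] at hj
        dsimp only at hj
        rw [if_neg (fun h => hne h)] at hj
        have hrLp : 0 < max (p (Lp ω)) (q (Lp ω)) :=
          lt_of_lt_of_le hp'.1 (le_max_left _ _)
        have h1 : E k ω / p k ≤ E k ω / min (p k) (q k) :=
          div_le_div_of_nonneg_left (hpos k).le hmk (min_le_left _ _)
        rw [div_mul_eq_mul_div] at hj
        have h2' := (div_lt_iff₀ hmk).1 hj
        have h2 : E k ω / min (p k) (q k) < E (Lp ω) ω / max (p (Lp ω)) (q (Lp ω)) := by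
          rw [div_lt_div_iff₀ hmk hrLp]
          linarith [h2']
        have h3 : E (Lp ω) ω / max (p (Lp ω)) (q (Lp ω)) ≤ E (Lp ω) ω / p (Lp ω) :=
          div_le_div_of_nonneg_left (hpos (Lp ω)).le hp'.1 (le_max_left _ _)
        linarith
      · by_contra hne
        have hLq := hq'.2 k hqk (fun h => hne h.symm)
        have hj := hA (Lq ω) (fun h => hne h)
        rw [hcdef] at hj
        dsimp only at hj
        rw [if_neg (fun h => hne h)] at hj
        have hrLq : 0 < max (p (Lq ω)) (q (Lq ω)) :=
          lt_of_lt_of_le hq'.1 (le_max_right _ _)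
        have h1 : E k ω / q k ≤ E k ω / min (p k) (q k) :=
          div_le_div_of_nonneg_left (hpos k).le hmk (min_le_right _ _)
        rw [div_mul_eq_mul_div] at hj
        have h2' := (div_lt_iff₀ hmk).1 hj
        have h2 : E k ω / min (p k) (q k) < E (Lq ω) ω / max (p (Lq ω)) (q (Lq ω)) := by
          rw [div_lt_div_iff₀ hmk hrLq]
          linarith [h2']
        have h3 : E (Lq ω) ω / max (p (Lq ω)) (q (Lq ω)) ≤ E (Lq ω) ω / q (Lq ω) :=
          div_le_div_of_nonneg_left (hpos (Lq ω)).le hq'.1 (le_max_right _ _)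
        linarith
  -- decomposition of the agreement event
  have hBmeas : ∀ k : N, MeasurableSet {ω | Lp ω = k ∧ Lq ω = k} := by
    intro k
    have h1 : {ω | Lp ω = k ∧ Lq ω = k}
        = (Lp ⁻¹' {k}) ∩ (Lq ⁻¹' {k}) := rfl
    rw [h1]
    exact (hLpmeas (measurableSet_singleton k)).inter (hLqmeas (measurableSet_singleton k))
  have hset : {ω | Lp ω = Lq ω} = ⋃ k, {ω | Lp ω = k ∧ Lq ω = k} := by
    ext ω
    simp only [mem_iUnion, mem_setOf_eq]
    constructor
    · intro h; exact ⟨Lq ω, h, rfl⟩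
    · rintro ⟨k, h1, h2⟩; rw [h1, h2]
  have heqmeas : MeasurableSet {ω | Lp ω = Lq ω} := by
    rw [hset]; exact MeasurableSet.iUnion hBmeas
  have hdecomp : μ {ω | Lp ω = Lq ω} = ∑' k, μ {ω | Lp ω = k ∧ Lq ω = k} := by
    rw [hset]
    refine measure_iUnion ?_ hBmeas
    intro a b hab
    rw [Function.onFun]
    refine Set.disjoint_left.2 ?_
    rintro ω ⟨h1, _⟩ ⟨h3, _⟩
    exact hab (h1.symm.trans h3)
  have hsum : ENNReal.ofReal ((1 - d)/(1 + d)) ≤ μ {ω | Lp ω = Lq ω} := by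
    rw [hdecomp]
    have h1 : ENNReal.ofReal ((1-d)/(1+d))
        = ∑' k, ENNReal.ofReal (min (p k) (q k) / (1+d)) := by
      rw [← ENNReal.ofReal_tsum_of_nonneg
        (fun k => div_nonneg (le_min (hp0 k) (hq0 k)) h1d.le)
        (hm_hs.summable.div_const _)]
      congr 1
      exact ((hm_hs.div_const (1+d)).tsum_eq).symm
    rw [h1]
    exact ENNReal.tsum_le_tsum hkey
  -- conclude
  have hμne : μ {ω | Lp ω ≠ Lq ω} = 1 - μ {ω | Lp ω = Lq ω} := by
    have h1 : {ω | Lp ω ≠ Lq ω} = {ω | Lp ω = Lq ω}ᶜ := rfl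
    rw [h1, measure_compl heqmeas (measure_ne_top μ _), measure_univ]
  have heqR : (1 - d)/(1 + d) ≤ (μ {ω | Lp ω = Lq ω}).toReal := by
    calc (1-d)/(1+d) = (ENNReal.ofReal ((1-d)/(1+d))).toReal := by
          rw [ENNReal.toReal_ofReal (div_nonneg (by linarith) h1d.le)]
      _ ≤ _ := ENNReal.toReal_mono (measure_ne_top μ _) hsum
  have hfinal1 : (μ {ω | Lp ω ≠ Lq ω}).toReal ≤ 2*d/(1+d) := by
    rw [hμne, ENNReal.toReal_sub_of_le prob_le_one ENNReal.one_ne_top, ENNReal.toReal_one]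
    have hkey2 : (1-d)/(1+d) + 2*d/(1+d) = 1 := by
      field_simp
      ring
    linarith
  constructor
  · exact hfinal1
  · exact div_le_self (by linarith) (by linarith)
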